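/- Let R = Z[x_1,...,x_n]/J, where J is the ideal generated by all elementary symmetric polynomials e_1(x_1,...,x_n), ..., e_n(x_1,...,x_n). If f is a Z-linear combination of x_1,...,x_n whose image in R satisfies f^{n-1} = 0, then f = 0 in R. -/

import Mathlib

open MvPolynomial Finset

/-- The set of the first `j` variables among `x_0, ..., x_{n-1}`. -/
def fv (n j : ℕ) : Finset (Fin n) := Finset.univ.filter (fun i => (i : ℕ) < j)

/-- Complete homogeneous symmetric polynomial of degree `m` in the variables indexed by `S`. -/
noncomputable def hh (R : Type*) [CommRing R] (n m : ℕ) (S : Finset (Fin n)) :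
    MvPolynomial (Fin n) R :=
  ∑ s ∈ S.sym m, ((s : Multiset (Fin n)).map (X : Fin n → MvPolynomial (Fin n) R)).prod

/-- Elementary symmetric polynomial of degree `m` in the variables indexed by `S`. -/
noncomputable def ee (R : Type*) [CommRing R] (n m : ℕ) (S : Finset (Fin n)) :
    MvPolynomial (Fin n) R :=
  ∑ s ∈ S.powersetCard m, ∏ i ∈ s, X i


section helpers

lemma prod_roots (n : ℕ) (hn : n ≠ 0) {ζ : ℂ} (hζ : IsPrimitiveRoot ζ n) :
    ∏ k ∈ Finset.range n, (Polynomial.X - Polynomial.C (ζ ^ k)) = Polynomial.X ^ n - 1 := by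
  have hmonic : (Polynomial.X ^ n - Polynomial.C (1 : ℂ)).Monic := Polynomial.monic_X_pow_sub_C (1 : ℂ) hn
  have hcard : (Polynomial.X ^ n - Polynomial.C (1 : ℂ)).roots.card = (Polynomial.X ^ n - Polynomial.C (1 : ℂ)).natDegree := by
    rw [Polynomial.natDegree_X_pow_sub_C, ← Polynomial.nthRoots, hζ.card_nthRoots_one]
  have h1 := Polynomial.prod_multiset_X_sub_C_of_monic_of_roots_card_eq hmonic hcard
  have h2 : (Polynomial.X ^ n - Polynomial.C (1 : ℂ)).roots = Polynomial.nthRoots n 1 := rfl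
  rw [h2, hζ.nthRoots_eq (one_pow n)] at h1
  rw [map_one] at h1
  rw [← h1]
  rw [Finset.prod_eq_multiset_prod]
  rw [Multiset.map_map]
  simp [Finset.range, Function.comp]

lemma esum_vanish (n m : ℕ) (hn : n ≠ 0) {ζ : ℂ} (hζ : IsPrimitiveRoot ζ n)
    (π : Equiv.Perm (Fin n)) (hm1 : 1 ≤ m) (hmn : m < n) :
    ∑ t ∈ Finset.powersetCard m (Finset.univ : Finset (Fin n)),
      ∏ i ∈ t, ζ ^ ((π i : Fin n) : ℕ) = 0 := by
  have hprod : ∏ i : Fin n, (Polynomial.X + Polynomial.C (-(ζ ^ ((π i : Fin n) : ℕ)))) = Polynomial.X ^ n - 1 := by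
    simp only [map_neg, ← sub_eq_add_neg]
    rw [Equiv.prod_comp π (fun i : Fin n => Polynomial.X - Polynomial.C (ζ ^ (i : ℕ)))]
    rw [Fin.prod_univ_eq_prod_range (fun k : ℕ => Polynomial.X - Polynomial.C (ζ ^ k)) n]
    exact prod_roots n hn hζ
  have hk : n - m ≤ #(Finset.univ : Finset (Fin n)) := by simp
  have hc := Finset.prod_X_add_C_coeff (Finset.univ : Finset (Fin n))
      (fun i => -(ζ ^ ((π i : Fin n) : ℕ))) hk
  rw [hprod] at hc
  have hcard : #(Finset.univ : Finset (Fin n)) = n := by simp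
  rw [hcard] at hc
  have hlhs : (Polynomial.X ^ n - 1 : Polynomial ℂ).coeff (n - m) = 0 := by
    rw [Polynomial.coeff_sub, Polynomial.coeff_X_pow, Polynomial.coeff_one]
    have h1 : ¬ (n - m = n) := by omega
    have h2 : ¬ (n - m = 0) := by omega
    simp [h1, h2]
  rw [hlhs, show n - (n - m) = m by omega] at hc
  have hrw : ∀ t ∈ Finset.powersetCard m (Finset.univ : Finset (Fin n)),
      ∏ i ∈ t, -(ζ ^ ((π i : Fin n) : ℕ)) = (-1) ^ m * ∏ i ∈ t, ζ ^ ((π i : Fin n) : ℕ) := by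
    intro t ht
    rw [Finset.mem_powersetCard] at ht
    rw [← ht.2]
    calc ∏ i ∈ t, -(ζ ^ ((π i : Fin n) : ℕ))
        = ∏ i ∈ t, ((-1) * ζ ^ ((π i : Fin n) : ℕ)) := by simp only [neg_one_mul]
      _ = (∏ _i ∈ t, (-1 : ℂ)) * ∏ i ∈ t, ζ ^ ((π i : Fin n) : ℕ) := Finset.prod_mul_distrib
      _ = (-1) ^ t.card * ∏ i ∈ t, ζ ^ ((π i : Fin n) : ℕ) := by rw [Finset.prod_const]
  rw [Finset.sum_congr rfl hrw, ← Finset.mul_sum] at hc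
  have hne : ((-1 : ℂ)) ^ m ≠ 0 := by simp
  field_simp at hc
  exact (mul_eq_zero.mp hc.symm).resolve_left hne

end helpers

lemma aeval_esymm_CX (n m : ℕ) (b : Fin n → ℂ) :
    MvPolynomial.aeval (fun k : Fin n => Polynomial.C (b k) * Polynomial.X)
      (esymm (Fin n) ℤ m)
      = Polynomial.C (∑ t ∈ Finset.powersetCard m (Finset.univ : Finset (Fin n)),
          ∏ i ∈ t, b i) * Polynomial.X ^ m := by
  have hterm : ∀ t ∈ Finset.powersetCard m (Finset.univ : Finset (Fin n)),
      MvPolynomial.aeval (R := ℤ) (fun k : Fin n => Polynomial.C (b k) * Polynomial.X) (∏ i ∈ t, MvPolynomial.X i)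
        = Polynomial.C (∏ i ∈ t, b i) * Polynomial.X ^ m := by
    intro t ht
    rw [map_prod (MvPolynomial.aeval (fun k : Fin n => Polynomial.C (b k) * Polynomial.X) : MvPolynomial (Fin n) ℤ →ₐ[ℤ] Polynomial ℂ) (fun i => MvPolynomial.X i) t]
    simp only [aeval_X]
    rw [Finset.prod_mul_distrib, Finset.prod_const, (Finset.mem_powersetCard.mp ht).2,
      ← map_prod (Polynomial.C : ℂ →+* Polynomial ℂ) b t]
  rw [MvPolynomial.esymm, map_sum, Finset.sum_congr rfl hterm, ← Finset.sum_mul, ← map_sum (Polynomial.C : ℂ →+* Polynomial ℂ) _ _]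

lemma sum_root_zero (n : ℕ) (hn2 : 2 ≤ n) (a : Fin n → ℤ)
    (J : Ideal (MvPolynomial (Fin n) ℤ))
    (hJ : J = Ideal.span (Set.range fun i : Fin n => esymm (Fin n) ℤ ((i : ℕ) + 1)))
    (hmem : (∑ i, C (a i) * X i) ^ (n - 1) ∈ J)
    {ζ : ℂ} (hζ : IsPrimitiveRoot ζ n) (π : Equiv.Perm (Fin n)) :
    ∑ k, (a k : ℂ) * ζ ^ ((π k : Fin n) : ℕ) = 0 := by
  have hn0 : n ≠ 0 := by omega
  set b : Fin n → ℂ := fun k => ζ ^ ((π k : Fin n) : ℕ) with hb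
  set φ : MvPolynomial (Fin n) ℤ →ₐ[ℤ] Polynomial ℂ :=
    MvPolynomial.aeval (fun k : Fin n => Polynomial.C (b k) * Polynomial.X) with hφ
  have hφJ : φ ((∑ i, C (a i) * X i) ^ (n - 1)) ∈
      Ideal.span {(Polynomial.X : Polynomial ℂ) ^ n} := by
    have h1 : φ ((∑ i, C (a i) * X i) ^ (n - 1)) ∈ Ideal.map φ J :=
      Ideal.mem_map_of_mem _ hmem
    rw [hJ, Ideal.map_span] at h1
    refine Ideal.span_le.mpr ?_ h1
    rintro y ⟨p, ⟨i, rfl⟩, rfl⟩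
    show φ (esymm (Fin n) ℤ ((i : ℕ) + 1)) ∈ _
    rw [hφ, aeval_esymm_CX n ((i : ℕ) + 1) b]
    rcases lt_or_eq_of_le (Nat.succ_le_of_lt i.isLt) with hlt | heq
    · rw [hb]
      rw [esum_vanish n ((i : ℕ) + 1) hn0 hζ π (by omega) hlt]
      simp
    · rw [show (i : ℕ) + 1 = n from heq]
      exact Ideal.mem_span_singleton.mpr ⟨Polynomial.C _, mul_comm _ _⟩
  have hφf : φ (∑ i, C (a i) * X i) =
      Polynomial.C (∑ k, (a k : ℂ) * b k) * Polynomial.X := by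
    rw [map_sum]
    have : ∀ k ∈ (Finset.univ : Finset (Fin n)),
        φ (C (a k) * X k) = Polynomial.C ((a k : ℂ) * b k) * Polynomial.X := by
      intro k _
      rw [map_mul, hφ]
      simp only [MvPolynomial.aeval_C, MvPolynomial.aeval_X]
      rw [show (algebraMap ℤ (Polynomial ℂ)) (a k) = Polynomial.C ((a k : ℂ)) by simp,
        ← mul_assoc, ← Polynomial.C_mul]
    rw [Finset.sum_congr rfl this, ← Finset.sum_mul,
      ← map_sum (Polynomial.C : ℂ →+* Polynomial ℂ) _ _]
  rw [map_pow, hφf, mul_pow, ← map_pow] at hφJ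
  have hdvd := Ideal.mem_span_singleton.mp hφJ
  have hcoeff := (Polynomial.X_pow_dvd_iff.mp hdvd) (n - 1) (by omega)
  rw [Polynomial.coeff_C_mul, Polynomial.coeff_X_pow, if_pos rfl, mul_one] at hcoeff
  have := pow_eq_zero_iff (n := n - 1) (by omega) |>.mp hcoeff
  exact this

/-- in `R = ℤ[x_1,...,x_n]/⟨e_1,...,e_n⟩` (Borel's presentation of the
cohomology of the full flag variety), a linear form `f` with `f^{n-1} = 0` is zero. -/
theorem stmt9 (n : ℕ) (a : Fin n → ℤ)
    (J : Ideal (MvPolynomial (Fin n) ℤ))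
    (hJ : J = Ideal.span (Set.range fun i : Fin n => esymm (Fin n) ℤ ((i : ℕ) + 1)))
    (h : (Ideal.Quotient.mk J (∑ i, C (a i) * X i)) ^ (n - 1) = 0) :
    Ideal.Quotient.mk J (∑ i, C (a i) * X i) = 0 := by
  rcases Nat.eq_zero_or_pos n with hn | hn
  · subst hn
    simp
  rw [← map_pow] at h
  have hmem : (∑ i, C (a i) * X i) ^ (n - 1) ∈ J := Ideal.Quotient.eq_zero_iff_mem.mp h
  have hkey : ∀ i j : Fin n, a i = a j := by
    intro i j
    rcases eq_or_ne i j with rfl | hij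
    · rfl
    have hn2 : 2 ≤ n := by
      by_contra hc
      have h1 : n = 1 := by omega
      subst h1
      exact hij (Fin.ext (by omega))
    have hn0 : n ≠ 0 := by omega
    have hζ : IsPrimitiveRoot (Complex.exp (2 * Real.pi * Complex.I / n)) n :=
      Complex.isPrimitiveRoot_exp n hn0
    set ζ : ℂ := Complex.exp (2 * Real.pi * Complex.I / n)
    have h1 := sum_root_zero n hn2 a J hJ hmem hζ 1
    have h2 := sum_root_zero n hn2 a J hJ hmem hζ (Equiv.swap i j)
    simp only [Equiv.Perm.coe_one, id_eq] at h1
    have hsub : ∑ k, ((a k : ℂ) * ζ ^ (k : ℕ) -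
        (a k : ℂ) * ζ ^ ((Equiv.swap i j k : Fin n) : ℕ)) = 0 := by
      rw [Finset.sum_sub_distrib, h1, h2, sub_zero]
    have hpair : ∑ k ∈ ({i, j} : Finset (Fin n)), ((a k : ℂ) * ζ ^ (k : ℕ) -
        (a k : ℂ) * ζ ^ ((Equiv.swap i j k : Fin n) : ℕ)) = 0 := by
      rw [← hsub]
      apply Finset.sum_subset (Finset.subset_univ _)
      intro k _ hk
      simp only [Finset.mem_insert, Finset.mem_singleton, not_or] at hk
      rw [Equiv.swap_apply_of_ne_of_ne hk.1 hk.2, sub_self]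
    rw [Finset.sum_pair hij, Equiv.swap_apply_left, Equiv.swap_apply_right] at hpair
    have hfact : ((a i : ℂ) - (a j : ℂ)) * (ζ ^ (i : ℕ) - ζ ^ (j : ℕ)) = 0 := by
      linear_combination hpair
    have hzne : (ζ ^ (i : ℕ) - ζ ^ (j : ℕ)) ≠ 0 := by
      intro hz
      exact hij (Fin.ext (hζ.pow_inj i.isLt j.isLt (sub_eq_zero.mp hz)))
    have hc : (a i : ℂ) = (a j : ℂ) :=
      sub_eq_zero.mp ((mul_eq_zero.mp hfact).resolve_right hzne)
    exact_mod_cast hc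
  have hf : (∑ i, C (a i) * X i) = C (a ⟨0, hn⟩) * esymm (Fin n) ℤ 1 := by
    rw [esymm_one, Finset.mul_sum]
    exact Finset.sum_congr rfl (fun k _ => by rw [hkey k ⟨0, hn⟩])
  rw [hf, Ideal.Quotient.eq_zero_iff_mem, hJ]
  exact Ideal.mul_mem_left _ _ (Ideal.subset_span ⟨⟨0, hn⟩, rfl⟩)
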